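/- If A, B ∈ ℂ^{N×N} are positive semidefinite Hermitian matrices, then their convolution A ⋄ B is positive semidefinite (Jury's theorem). -/

import Mathlib

noncomputable def conv {M N : ℕ} (A B : Matrix (Fin M) (Fin N) ℂ) : Matrix (Fin M) (Fin N) ℂ :=
  fun i j => ∑ l ∈ Finset.Iic i, ∑ k ∈ Finset.Iic j, A l k * B (i - l) (j - k)

noncomputable def convId {M N : ℕ} : Matrix (Fin M) (Fin N) ℂ :=
  fun i j => if i.1 = 0 ∧ j.1 = 0 then 1 else 0

noncomputable def convPow {M N : ℕ} (A : Matrix (Fin M) (Fin N) ℂ) : ℕ → Matrix (Fin M) (Fin N) ℂ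
  | 0 => convId
  | k+1 => conv (convPow A k) A

noncomputable def convPoly {M N : ℕ} (p : Polynomial ℂ) (A : Matrix (Fin M) (Fin N) ℂ) :
    Matrix (Fin M) (Fin N) ℂ :=
  ∑ k ∈ p.support, p.coeff k • convPow A k

open Matrix in
open scoped ComplexOrder in
lemma psd_vecMulVec {n : Type*} [Fintype n] (v : n → ℂ) :
    (Matrix.vecMulVec v (star v)).PosSemidef := by
  rw [Matrix.posSemidef_iff_dotProduct_mulVec]
  constructor
  · ext i j
    simp [Matrix.vecMulVec, Matrix.conjTranspose_apply, mul_comm]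
  · intro x
    have : star x ⬝ᵥ (Matrix.vecMulVec v (star v)) *ᵥ x
        = star (∑ j, v j * star (x j)) * (∑ j, v j * star (x j)) := by
      simp only [dotProduct, Matrix.mulVec, Matrix.vecMulVec, Pi.star_apply,
        star_sum, star_mul', star_star, Finset.mul_sum, Finset.sum_mul]
      congr 1; ext i; congr 1; ext j
      simp only [Matrix.of_apply]; ring
    rw [this]
    exact star_mul_self_nonneg _

open scoped ComplexOrder in
lemma psd_sum {n ι : Type*} [Fintype n] [DecidableEq n] (s : Finset ι)
    (f : ι → Matrix n n ℂ) (h : ∀ i ∈ s, (f i).PosSemidef) :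
    (∑ i ∈ s, f i).PosSemidef :=
  Finset.sum_induction f _ (fun _ _ => Matrix.PosSemidef.add) Matrix.PosSemidef.zero h

lemma sum4_comm {α β γ δ M : Type*} [AddCommMonoid M] (s : Finset α) (t : Finset β)
    (u : Finset γ) (v : Finset δ) (f : α → β → γ → δ → M) :
    ∑ a ∈ s, ∑ b ∈ t, ∑ c ∈ u, ∑ d ∈ v, f a b c d
      = ∑ c ∈ u, ∑ d ∈ v, ∑ a ∈ s, ∑ b ∈ t, f a b c d :=
  calc ∑ a ∈ s, ∑ b ∈ t, ∑ c ∈ u, ∑ d ∈ v, f a b c d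
      = ∑ a ∈ s, ∑ c ∈ u, ∑ b ∈ t, ∑ d ∈ v, f a b c d :=
        Finset.sum_congr rfl fun _ _ => Finset.sum_comm
    _ = ∑ c ∈ u, ∑ a ∈ s, ∑ b ∈ t, ∑ d ∈ v, f a b c d := Finset.sum_comm
    _ = ∑ c ∈ u, ∑ a ∈ s, ∑ d ∈ v, ∑ b ∈ t, f a b c d :=
        Finset.sum_congr rfl fun _ _ => Finset.sum_congr rfl fun _ _ => Finset.sum_comm
    _ = ∑ c ∈ u, ∑ d ∈ v, ∑ a ∈ s, ∑ b ∈ t, f a b c d :=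
        Finset.sum_congr rfl fun _ _ => Finset.sum_comm

open scoped ComplexOrder in
theorem conv_posSemidef (N : ℕ) (A B : Matrix (Fin N) (Fin N) ℂ)
    (hA : A.PosSemidef) (hB : B.PosSemidef) : (conv A B).PosSemidef := by
  classical
  obtain ⟨C, hC⟩ : ∃ C : Matrix (Fin N) (Fin N) ℂ, A = Matrix.conjTranspose C * C := by
    open scoped MatrixOrder in
    exact CStarAlgebra.nonneg_iff_eq_star_mul_self.mp hA.nonneg
  obtain ⟨D, hD⟩ : ∃ D : Matrix (Fin N) (Fin N) ℂ, B = Matrix.conjTranspose D * D := by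
    open scoped MatrixOrder in
    exact CStarAlgebra.nonneg_iff_eq_star_mul_self.mp hB.nonneg
  set u : Fin N → Fin N → Fin N → ℂ :=
    fun r s i => ∑ l ∈ Finset.Iic i, star (C r l) * star (D s (i - l)) with hu
  have key : conv A B = ∑ r : Fin N, ∑ s : Fin N,
      Matrix.vecMulVec (u r s) (star (u r s)) := by
    funext i j
    have hAe : ∀ l k, A l k = ∑ r, star (C r l) * C r k := by
      intro l k; rw [hC]; simp [Matrix.mul_apply, Matrix.conjTranspose_apply]
    have hBe : ∀ l k, B l k = ∑ s, star (D s l) * D s k := by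
      intro l k; rw [hD]; simp [Matrix.mul_apply, Matrix.conjTranspose_apply]
    simp only [conv, hAe, hBe, Matrix.sum_apply, Matrix.vecMulVec_apply, Pi.star_apply,
      hu, star_sum, star_mul', star_star, Finset.sum_mul_sum]
    rw [sum4_comm]
    refine Finset.sum_congr rfl fun r _ => Finset.sum_congr rfl fun s _ =>
      Finset.sum_congr rfl fun l _ => Finset.sum_congr rfl fun k _ => by ring
  rw [key]
  exact psd_sum _ _ fun r _ => psd_sum _ _ fun s _ => psd_vecMulVec _
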